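/- Let r, l > 0 and let L~(l,r;beta) be the Legendre transform of alpha |-> r*(e^alpha -1) + l*(e^{-alpha}-1). Then L~ is twice continuously differentiable in beta, its second derivative at beta = r - l equals 1/(r+l), and consequently the second-order Taylor expansion at beta_0 = r - l is L~(l,r;beta) = (beta - (r-l))^2 / (2(r+l)) + o((beta - (r-l))^2). -/

import Mathlib

open Asymptotics

/-- Second-order Taylor little-o lemma in 1D. -/
lemma taylor2_isLittleO {f f' : ℝ → ℝ} {x₀ c : ℝ}
    (hf : ∀ x, HasDerivAt f (f' x) x) (hf' : HasDerivAt f' c x₀)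
    (h0 : f x₀ = 0) (h1 : f' x₀ = 0) :
    (fun x => f x - c * (x - x₀) ^ 2 / 2) =o[nhds x₀] fun x => (x - x₀) ^ 2 := by
  set g : ℝ → ℝ := fun x => f x - c * (x - x₀) ^ 2 / 2 with hg
  set g' : ℝ → ℝ := fun x => f' x - c * (x - x₀) with hg'
  have hgd : ∀ x, HasDerivAt g (g' x) x := by
    intro x
    have h2 : HasDerivAt (fun x : ℝ => c * (x - x₀) ^ 2 / 2) (c * (x - x₀)) x := by
      have : HasDerivAt (fun x : ℝ => (x - x₀) ^ 2) (2 * (x - x₀)) x := by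
        simpa [Function.comp_def] using ((hasDerivAt_pow 2 (x - x₀)).comp x ((hasDerivAt_id x).sub_const x₀))
      have := (this.const_mul c).div_const 2
      exact this.congr_deriv (by ring)
    exact (hf x).sub h2
  have hg'd : HasDerivAt g' 0 x₀ := by
    have h2 : HasDerivAt (fun x : ℝ => c * (x - x₀)) c x₀ := by
      simpa using ((hasDerivAt_id x₀).sub_const x₀).const_mul c
    have := hf'.sub h2
    rw [sub_self] at this
    exact this
  have hg'0 : g' x₀ = 0 := by simp [hg', h1]
  -- g' = o(x - x₀)
  have hlo : g' =o[nhds x₀] fun x => x - x₀ := by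
    have := hg'd.isLittleO
    simpa [hg'0] using this
  rw [Asymptotics.isLittleO_iff]
  intro ε hε
  have hε2 : 0 < ε / 2 := by linarith
  rcases Metric.eventually_nhds_iff.mp (Asymptotics.isLittleO_iff.mp hlo hε2) with ⟨δ, hδ, hb⟩
  filter_upwards [Metric.ball_mem_nhds x₀ hδ] with x hx
  -- use the mean value inequality on the closed ball of radius |x - x₀|
  have hxd : dist x x₀ < δ := hx
  set ρ := ‖x - x₀‖ with hρ
  have key : ‖g x - g x₀‖ ≤ (ε / 2 * ρ) * ‖x - x₀‖ := by
    apply Convex.norm_image_sub_le_of_norm_hasDerivWithin_le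
      (f' := g') (s := Metric.closedBall x₀ ρ)
      (fun y _ => (hgd y).hasDerivWithinAt)
      _ (convex_closedBall _ _) (Metric.mem_closedBall_self (norm_nonneg _))
      (by simp only [Metric.mem_closedBall, dist_eq_norm, hρ, le_refl])
    intro y hy
    have hyρ : ‖y - x₀‖ ≤ ρ := by simpa [Metric.mem_closedBall, dist_eq_norm] using hy
    have hyδ : dist y x₀ < δ := by
      have : ρ < δ := by rw [hρ, ← dist_eq_norm]; exact hxd
      calc dist y x₀ = ‖y - x₀‖ := by rw [dist_eq_norm]
        _ ≤ ρ := hyρ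
        _ < δ := this
    calc ‖g' y‖ ≤ ε / 2 * ‖y - x₀‖ := by simpa using hb hyδ
      _ ≤ ε / 2 * ρ := by nlinarith [norm_nonneg (y - x₀)]
  have hg0 : g x₀ = 0 := by simp [hg, h0]
  rw [hg0, sub_zero] at key
  calc ‖g x‖ ≤ ε / 2 * ρ * ‖x - x₀‖ := key
    _ ≤ ε * ‖(x - x₀) ^ 2‖ := by
        rw [hρ]
        have h := norm_nonneg (x - x₀)
        rw [norm_pow]
        nlinarith

/-- For `r, l > 0`, the Legendre transform
`L̃(l,r;β) = β log((β + √(β²+4rl))/(2r)) - √(β²+4rl) + l + r` is `C²` in `β`, its second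
derivative at `β = r - l` equals `1/(r+l)`, and its second-order Taylor expansion at
`β₀ = r - l` is `L̃(l,r;β) = (β-(r-l))²/(2(r+l)) + o((β-(r-l))²)`. -/
theorem lagrangian_second_order_expansion (r l : ℝ) (hr : 0 < r) (hl : 0 < l) :
    let L : ℝ → ℝ := fun β =>
      β * Real.log ((β + Real.sqrt (β ^ 2 + 4 * r * l)) / (2 * r))
        - Real.sqrt (β ^ 2 + 4 * r * l) + l + r
    ContDiff ℝ 2 L
    ∧ iteratedDeriv 2 L (r - l) = 1 / (r + l)
    ∧ (fun β => L β - (β - (r - l)) ^ 2 / (2 * (r + l)))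
        =o[nhds (r - l)] fun β => (β - (r - l)) ^ 2 := by
  intro L
  set s : ℝ → ℝ := fun β => Real.sqrt (β ^ 2 + 4 * r * l) with hs
  have hqpos : ∀ β : ℝ, 0 < β ^ 2 + 4 * r * l := by
    intro β; nlinarith [sq_nonneg β]
  have hspos : ∀ β : ℝ, 0 < s β := fun β => Real.sqrt_pos.mpr (hqpos β)
  have hs_gt : ∀ β : ℝ, |β| < s β := by
    intro β
    have : |β| = Real.sqrt (β ^ 2) := by rw [Real.sqrt_sq_eq_abs]
    rw [this]
    apply Real.sqrt_lt_sqrt (sq_nonneg β)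
    nlinarith
  have hbs : ∀ β : ℝ, 0 < β + s β := by
    intro β
    have := hs_gt β
    have := abs_le.mp (le_of_lt this)
    linarith [neg_abs_le β, this.1]
  have hupos : ∀ β : ℝ, 0 < (β + s β) / (2 * r) := fun β => div_pos (hbs β) (by linarith)
  -- derivative of s
  have hsd : ∀ β : ℝ, HasDerivAt s (β / s β) β := by
    intro β
    have h1 : HasDerivAt (fun β : ℝ => β ^ 2 + 4 * r * l) (2 * β) β := by
      simpa using (hasDerivAt_pow 2 β).add_const (4 * r * l)
    have h2 := (Real.hasDerivAt_sqrt (ne_of_gt (hqpos β))).comp β h1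
    have h3 : Real.sqrt (β ^ 2 + 4 * r * l) ≠ 0 := ne_of_gt (hspos β)
    exact h2.congr_deriv (by simp only [hs]; field_simp)
  -- derivative of L' := log ((β + s β) / (2r))
  set L' : ℝ → ℝ := fun β => Real.log ((β + s β) / (2 * r)) with hL'
  have hL'd : ∀ β : ℝ, HasDerivAt L' (1 / s β) β := by
    intro β
    have hu : HasDerivAt (fun β => (β + s β) / (2 * r)) ((1 + β / s β) / (2 * r)) β :=
      ((hasDerivAt_id β).add (hsd β)).div_const (2 * r)
    have hlog := (Real.hasDerivAt_log (ne_of_gt (hupos β))).comp β hu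
    have h1 := (hspos β).ne'
    have h2 := (hbs β).ne'
    exact hlog.congr_deriv (by field_simp; ring)
  -- derivative of L
  have hLd : ∀ β : ℝ, HasDerivAt L (L' β) β := by
    intro β
    have hu : HasDerivAt (fun β => (β + s β) / (2 * r)) ((1 + β / s β) / (2 * r)) β :=
      ((hasDerivAt_id β).add (hsd β)).div_const (2 * r)
    have hmul : HasDerivAt (fun β => β * L' β)
        (1 * L' β + β * (1 / s β)) β :=
      (hasDerivAt_id β).mul (hL'd β)
    have hfull := ((hmul.sub (hsd β)).add_const l).add_const r
    exact hfull.congr_deriv (by ring)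
  have hderivL : deriv L = L' := funext fun β => (hLd β).deriv
  have hderivL' : deriv L' = fun β => 1 / s β := funext fun β => (hL'd β).deriv
  -- continuity of 1 / s
  have hscont : Continuous s := Real.continuous_sqrt.comp (by continuity)
  have hinvcont : Continuous fun β => 1 / s β :=
    continuous_const.div hscont fun β => ne_of_gt (hspos β)
  -- key value: s (r - l) = r + l
  have hsval : s (r - l) = r + l := by
    show Real.sqrt ((r - l) ^ 2 + 4 * r * l) = r + l
    have h : (r - l) ^ 2 + 4 * r * l = (r + l) ^ 2 := by ring
    rw [h, Real.sqrt_sq (by linarith)]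
  constructor
  · -- C²
    rw [show ((2 : WithTop ℕ∞)) = 1 + 1 by rfl, contDiff_succ_iff_deriv]
    refine ⟨fun β => (hLd β).differentiableAt, by simp, ?_⟩
    rw [hderivL, contDiff_one_iff_deriv]
    exact ⟨fun β => (hL'd β).differentiableAt, hderivL' ▸ hinvcont⟩
  constructor
  · rw [iteratedDeriv_succ, iteratedDeriv_one, hderivL, hderivL']
    show 1 / s (r - l) = 1 / (r + l)
    rw [hsval]
  · -- little-o
    have h0 : L (r - l) = 0 := by
      show (r - l) * Real.log ((r - l + s (r - l)) / (2 * r)) - s (r - l) + l + r = 0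
      rw [hsval]
      have : (r - l + (r + l)) / (2 * r) = 1 := by field_simp; ring
      rw [this, Real.log_one]
      ring
    have h1 : L' (r - l) = 0 := by
      show Real.log ((r - l + s (r - l)) / (2 * r)) = 0
      have h : (r - l + s (r - l)) / (2 * r) = 1 := by rw [hsval]; field_simp; ring
      rw [h, Real.log_one]
    have hf' : HasDerivAt L' (1 / (r + l)) (r - l) := by
      have := hL'd (r - l)
      rwa [hsval] at this
    have key := taylor2_isLittleO hLd hf' h0 h1
    have : (fun β => L β - (β - (r - l)) ^ 2 / (2 * (r + l)))
        = fun β => L β - 1 / (r + l) * (β - (r - l)) ^ 2 / 2 := by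
      funext β
      have : (r + l) ≠ 0 := by positivity
      field_simp
    rw [this]
    exact key
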